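/- arXiv:2106.11935 — 2 statements merged into one kernel-verified Lean document; each statement's English description precedes it below -/
import Mathlib

section
/- Let gap_min > 0 and suppose for every threshold Δ ∈ (0, H] and every k, Σ_{j=1}^k 1[V*_h(s^j) − Q^{π^j}_h(s^j,a^j) ≥ Δ] ≤ C/Δ² for a constant C > 0. Suppose also every nonzero value of V*_h(s^j) − Q*_h(s^j,a^j) lies in [gap_min, H] and Q*_h ≥ Q^{π^j}_h pointwise. Then Σ_{j=1}^k (V*_h(s^j) − Q*_h(s^j,a^j)) ≤ Σ_{n=1}^{N} (C/(2^{n-1} gap_min)) ≤ 2C/gap_min, where N = ⌈log₂(H/gap_min)⌉; i.e., the cumulative optimal-policy suboptimality at step h is at most 2C/gap_min. -/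
open Finset

theorem stmt7 (H gapmin C : ℝ) (hgapmin : 0 < gapmin) (hH : gapmin ≤ H) (hC : 0 < C)
    (gstar gpi : ℕ → ℝ)
    (hcount : ∀ Δ : ℝ, 0 < Δ → Δ ≤ H → ∀ k : ℕ,
      (((Finset.range k).filter (fun j => Δ ≤ gpi j)).card : ℝ) ≤ C / Δ ^ 2)
    (hvals : ∀ j, gstar j = 0 ∨ (gapmin ≤ gstar j ∧ gstar j ≤ H))
    (hle : ∀ j, gstar j ≤ gpi j)
    (k : ℕ) :
    ∑ j ∈ Finset.range k, gstar j ≤ 2 * C / gapmin := by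
  have hsqC : (0:ℝ) < Real.sqrt C := Real.sqrt_pos.mpr hC
  -- Key induction: any subset T of range k with all gaps in [gapmin, H] has
  -- sum ≤ 2 √C √|T|.
  have key : ∀ M : ℕ, ∀ T : Finset ℕ, T.card = M → T ⊆ Finset.range k →
      (∀ j ∈ T, gapmin ≤ gstar j ∧ gstar j ≤ H) →
      ∑ j ∈ T, gstar j ≤ 2 * Real.sqrt C * Real.sqrt M := by
    intro M
    induction M with
    | zero =>
      intro T hcard _ _
      rw [Finset.card_eq_zero.mp hcard]
      simp
    | succ M ih =>
      intro T hcard hsub hbound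
      have hne : T.Nonempty := Finset.card_pos.mp (by omega)
      obtain ⟨j0, hj0T, hj0min⟩ := Finset.exists_min_image T gstar hne
      have hg0 : gapmin ≤ gstar j0 ∧ gstar j0 ≤ H := hbound j0 hj0T
      have hg0pos : 0 < gstar j0 := lt_of_lt_of_le hgapmin hg0.1
      -- count bound at Δ = gstar j0
      have hcnt := hcount (gstar j0) hg0pos hg0.2 k
      have hTsub : T ⊆ (Finset.range k).filter (fun j => gstar j0 ≤ gpi j) := by
        intro j hj
        refine Finset.mem_filter.mpr ⟨hsub hj, le_trans (hj0min j hj) (hle j)⟩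
      have hMle : ((M+1 : ℕ) : ℝ) ≤ C / (gstar j0) ^ 2 := by
        calc ((M+1 : ℕ) : ℝ) = (T.card : ℝ) := by rw [hcard]
        _ ≤ (((Finset.range k).filter (fun j => gstar j0 ≤ gpi j)).card : ℝ) := by
              exact_mod_cast Finset.card_le_card hTsub
        _ ≤ C / (gstar j0) ^ 2 := hcnt
      have hMpos : (0:ℝ) < ((M+1 : ℕ) : ℝ) := by positivity
      have hg0sq : (gstar j0) ^ 2 ≤ C / ((M+1 : ℕ) : ℝ) := by
        rw [le_div_iff₀ hMpos]
        have h' : ((M+1:ℕ):ℝ) * (gstar j0)^2 ≤ C :=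
          (le_div_iff₀ (by positivity)).mp hMle
        linarith
      have hg0le : gstar j0 ≤ Real.sqrt C / Real.sqrt ((M+1 : ℕ) : ℝ) := by
        have : gstar j0 ≤ Real.sqrt (C / ((M+1:ℕ):ℝ)) := by
          rw [show gstar j0 = Real.sqrt ((gstar j0)^2) by
            rw [Real.sqrt_sq hg0pos.le]]
          exact Real.sqrt_le_sqrt hg0sq
        rwa [Real.sqrt_div' _ _] at this <;> try positivity
      -- apply IH to T.erase j0
      have herase : (T.erase j0).card = M := by
        rw [Finset.card_erase_of_mem hj0T, hcard]; omega
      have hsum := ih (T.erase j0) herase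
        (fun j hj => hsub (Finset.mem_of_mem_erase hj))
        (fun j hj => hbound j (Finset.mem_of_mem_erase hj))
      have hsplit : ∑ j ∈ T, gstar j = gstar j0 + ∑ j ∈ T.erase j0, gstar j :=
        (Finset.add_sum_erase T gstar hj0T).symm
      rw [hsplit]
      have ha : Real.sqrt ((M:ℕ):ℝ) ^ 2 = ((M:ℕ):ℝ) :=
        Real.sq_sqrt (by positivity)
      have hb : Real.sqrt (((M+1:ℕ)):ℝ) ^ 2 = (((M+1:ℕ)):ℝ) :=
        Real.sq_sqrt (by positivity)
      have hbpos : (0:ℝ) < Real.sqrt (((M+1:ℕ)):ℝ) := Real.sqrt_pos.mpr hMpos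
      have hanneg : (0:ℝ) ≤ Real.sqrt ((M:ℕ):ℝ) := Real.sqrt_nonneg _
      have hcast : (((M+1:ℕ)):ℝ) = ((M:ℕ):ℝ) + 1 := by push_cast; ring
      -- need: √C/√(M+1) + 2√C√M ≤ 2√C√(M+1)
      have hkey : Real.sqrt C / Real.sqrt (((M+1:ℕ)):ℝ) +
          2 * Real.sqrt C * Real.sqrt ((M:ℕ):ℝ) ≤
          2 * Real.sqrt C * Real.sqrt (((M+1:ℕ)):ℝ) := by
        set a := Real.sqrt ((M:ℕ):ℝ)
        set b := Real.sqrt (((M+1:ℕ)):ℝ)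
        rw [div_add' _ _ _ (ne_of_gt hbpos), div_le_iff₀ hbpos]
        have hab : b^2 = a^2 + 1 := by rw [ha, hb, hcast]
        nlinarith [sq_nonneg (a - b), hsqC, hbpos, hanneg, mul_pos hsqC hbpos]
      calc gstar j0 + ∑ j ∈ T.erase j0, gstar j
          ≤ Real.sqrt C / Real.sqrt (((M+1:ℕ)):ℝ) +
            2 * Real.sqrt C * Real.sqrt ((M:ℕ):ℝ) := add_le_add hg0le hsum
        _ ≤ 2 * Real.sqrt C * Real.sqrt (((M+1:ℕ)):ℝ) := hkey
  -- Apply to the set of nonzero gaps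
  set T := (Finset.range k).filter (fun j => gstar j ≠ 0) with hT
  have hsumeq : ∑ j ∈ Finset.range k, gstar j = ∑ j ∈ T, gstar j := by
    rw [hT]
    exact (Finset.sum_filter_ne_zero _).symm
  have hbound : ∀ j ∈ T, gapmin ≤ gstar j ∧ gstar j ≤ H := by
    intro j hj
    rcases hvals j with h0 | h1
    · exact absurd h0 (Finset.mem_filter.mp hj).2
    · exact h1
  have hmain := key T.card T rfl (Finset.filter_subset _ _) hbound
  -- bound |T| ≤ C / gapmin²
  have hTsub : T ⊆ (Finset.range k).filter (fun j => gapmin ≤ gpi j) := by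
    intro j hj
    refine Finset.mem_filter.mpr ⟨(Finset.mem_filter.mp hj).1,
      le_trans (hbound j hj).1 (hle j)⟩
  have hMle : ((T.card : ℕ) : ℝ) ≤ C / gapmin ^ 2 := by
    calc ((T.card : ℕ) : ℝ)
        ≤ (((Finset.range k).filter (fun j => gapmin ≤ gpi j)).card : ℝ) := by
          exact_mod_cast Finset.card_le_card hTsub
      _ ≤ C / gapmin ^ 2 := hcount gapmin hgapmin hH k
  have hsqrtM : Real.sqrt ((T.card : ℕ) : ℝ) ≤ Real.sqrt C / gapmin := by
    have h1 : Real.sqrt ((T.card : ℕ) : ℝ) ≤ Real.sqrt (C / gapmin ^ 2) :=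
      Real.sqrt_le_sqrt hMle
    have h2 : Real.sqrt (C / gapmin ^ 2) = Real.sqrt C / gapmin := by
      rw [Real.sqrt_div' , Real.sqrt_sq hgapmin.le] <;> try positivity
    rw [h2] at h1; exact h1
  calc ∑ j ∈ Finset.range k, gstar j = ∑ j ∈ T, gstar j := hsumeq
    _ ≤ 2 * Real.sqrt C * Real.sqrt ((T.card : ℕ) : ℝ) := hmain
    _ ≤ 2 * Real.sqrt C * (Real.sqrt C / gapmin) := by
        apply mul_le_mul_of_nonneg_left hsqrtM (by positivity)
    _ = 2 * C / gapmin := by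
        rw [mul_div_assoc]
        rw [show 2 * Real.sqrt C * (Real.sqrt C / gapmin)
          = 2 * (Real.sqrt C * Real.sqrt C) / gapmin by ring,
          Real.mul_self_sqrt hC.le]
        ring
end

section
/- Let Λ ∈ ℝ^{d×d} be symmetric positive semidefinite with spectral decomposition Λ = QᵀDQ, and suppose every nonzero eigenvalue of Λ is at least σ > 0. Let k ≥ 1 and ι ∈ ℝ be such that (k−1)σ − ι ≥ σk/2 > 0 and ι > 0. Let B = (k−1)Λ − ι I (interpreted via B = Qᵀ((k−1)D − ι I)Q, invertible since every diagonal entry of (k−1)D − ιI is nonzero). Then for every unit vector u in the column space of Λ (i.e., u = Λx with ‖Λx‖₂ = 1), uᵀ B^{-1} u ≤ 2/(σ k). -/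
open Matrix Finset

theorem stmt9 {d : ℕ} (Qm D Λ : Matrix (Fin d) (Fin d) ℝ)
    (hQ : Qm * Qmᵀ = 1) (hQ' : Qmᵀ * Qm = 1)
    (hD : D.IsDiag) (hDnn : ∀ i, 0 ≤ D i i)
    (σ : ℝ) (hσ : 0 < σ)
    (heig : ∀ i, D i i = 0 ∨ σ ≤ D i i)
    (hΛ : Λ = Qmᵀ * D * Qm)
    (k ι : ℝ) (hk : 1 ≤ k) (hι : 0 < ι)
    (hpos : 0 < σ * k / 2)
    (hineq : σ * k / 2 ≤ (k - 1) * σ - ι)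
    (B : Matrix (Fin d) (Fin d) ℝ)
    (hB : B = (k - 1) • Λ - ι • (1 : Matrix (Fin d) (Fin d) ℝ)) :
    IsUnit B ∧ ∀ x : Fin d → ℝ, (∑ i, (Λ.mulVec x i) ^ 2) = 1 →
      Λ.mulVec x ⬝ᵥ B⁻¹.mulVec (Λ.mulVec x) ≤ 2 / (σ * k) := by
  set e : Fin d → ℝ := fun i => (k - 1) * D i i - ι with he_def
  have helb : ∀ i, D i i ≠ 0 → σ * k / 2 ≤ e i := by
    intro i hi
    rcases heig i with h | h
    · exact absurd h hi
    · have : (k - 1) * σ ≤ (k - 1) * D i i :=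
        mul_le_mul_of_nonneg_left h (by linarith)
      simp only [he_def]
      linarith
  have henz : ∀ i, e i ≠ 0 := by
    intro i
    by_cases hi : D i i = 0
    · simp [he_def, hi]; linarith
    · exact (lt_of_lt_of_le hpos (helb i hi)).ne'
  have hDdiag : D = Matrix.diagonal (fun i => D i i) := by
    ext i j
    by_cases h : i = j
    · subst h; simp
    · simp [Matrix.diagonal, h, hD h]
  have h1 : (k - 1) • D - ι • (1 : Matrix (Fin d) (Fin d) ℝ) = Matrix.diagonal e := by
    ext i j
    by_cases h : i = j
    · subst h
      simp [Matrix.sub_apply, Matrix.smul_apply, Matrix.one_apply, he_def]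
    · simp [Matrix.sub_apply, Matrix.smul_apply, Matrix.one_apply_ne h, hD h,
        Matrix.diagonal_apply_ne _ h]
  have hBform : B = Qmᵀ * Matrix.diagonal e * Qm := by
    rw [hB, hΛ, ← h1, Matrix.mul_sub, Matrix.sub_mul]
    congr 1
    · rw [Matrix.mul_smul, Matrix.smul_mul]
    · rw [Matrix.mul_smul, Matrix.mul_one, Matrix.smul_mul, hQ']
  set C : Matrix (Fin d) (Fin d) ℝ := Qmᵀ * Matrix.diagonal (fun i => (e i)⁻¹) * Qm with hC
  have hEE' : Matrix.diagonal e * Matrix.diagonal (fun i => (e i)⁻¹) = 1 := by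
    rw [Matrix.diagonal_mul_diagonal,
      show (fun i => e i * (e i)⁻¹) = fun _ => (1 : ℝ) from funext fun i => mul_inv_cancel₀ (henz i),
      Matrix.diagonal_one]
  have hE'E : Matrix.diagonal (fun i => (e i)⁻¹) * Matrix.diagonal e = 1 := by
    rw [Matrix.diagonal_mul_diagonal,
      show (fun i => (e i)⁻¹ * e i) = fun _ => (1 : ℝ) from funext fun i => inv_mul_cancel₀ (henz i),
      Matrix.diagonal_one]
  have hBC : B * C = 1 := by
    rw [hBform, hC]
    calc Qmᵀ * Matrix.diagonal e * Qm * (Qmᵀ * Matrix.diagonal (fun i => (e i)⁻¹) * Qm)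
        = Qmᵀ * Matrix.diagonal e * (Qm * Qmᵀ) * Matrix.diagonal (fun i => (e i)⁻¹) * Qm := by
          noncomm_ring
      _ = Qmᵀ * (Matrix.diagonal e * Matrix.diagonal (fun i => (e i)⁻¹)) * Qm := by
          rw [hQ]; noncomm_ring
      _ = 1 := by rw [hEE', mul_one, hQ']
  have hCB : C * B = 1 := by
    rw [hBform, hC]
    calc Qmᵀ * Matrix.diagonal (fun i => (e i)⁻¹) * Qm * (Qmᵀ * Matrix.diagonal e * Qm)
        = Qmᵀ * Matrix.diagonal (fun i => (e i)⁻¹) * (Qm * Qmᵀ) * Matrix.diagonal e * Qm := by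
          noncomm_ring
      _ = Qmᵀ * (Matrix.diagonal (fun i => (e i)⁻¹) * Matrix.diagonal e) * Qm := by
          rw [hQ]; noncomm_ring
      _ = 1 := by rw [hE'E, mul_one, hQ']
  have hunit : IsUnit B := ⟨⟨B, C, hBC, hCB⟩, rfl⟩
  have hBinv : B⁻¹ = C := Matrix.inv_eq_right_inv hBC
  refine ⟨hunit, ?_⟩
  intro x hx
  set y : Fin d → ℝ := Qm.mulVec x with hy
  set u : Fin d → ℝ := Λ.mulVec x with hu
  have hQdot : ∀ a b : Fin d → ℝ, Qmᵀ.mulVec a ⬝ᵥ Qmᵀ.mulVec b = a ⬝ᵥ b := by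
    intro a b
    rw [Matrix.dotProduct_mulVec]
    have : Matrix.vecMul (Qmᵀ.mulVec a) Qmᵀ = a := by
      rw [Matrix.mulVec_transpose, Matrix.vecMul_vecMul, hQ, Matrix.vecMul_one]
    rw [this]
  have huform : u = Qmᵀ.mulVec (D.mulVec y) := by
    rw [hu, hΛ, ← Matrix.mulVec_mulVec, ← Matrix.mulVec_mulVec]
  have hQu : Qm.mulVec u = D.mulVec y := by
    rw [huform, Matrix.mulVec_mulVec, hQ, Matrix.one_mulVec]
  have hCu : C.mulVec u = Qmᵀ.mulVec ((Matrix.diagonal (fun i => (e i)⁻¹)).mulVec (D.mulVec y)) := by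
    rw [hC, ← Matrix.mulVec_mulVec, ← Matrix.mulVec_mulVec, hQu]
  have hdot : u ⬝ᵥ C.mulVec u = (D.mulVec y) ⬝ᵥ (Matrix.diagonal (fun i => (e i)⁻¹)).mulVec (D.mulVec y) := by
    rw [hCu, huform, hQdot]
  have hDy : ∀ i, D.mulVec y i = D i i * y i := by
    intro i
    rw [hDdiag]
    simp [Matrix.mulVec_diagonal]
  have hsum : ∑ i, (D i i * y i) ^ 2 = 1 := by
    have h1 : u ⬝ᵥ u = 1 := by
      rw [dotProduct]
      rw [← hx]
      exact Finset.sum_congr rfl fun i _ => (sq (u i)).symm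
    have h2 : u ⬝ᵥ u = (D.mulVec y) ⬝ᵥ (D.mulVec y) := by
      rw [huform, hQdot]
    rw [h2] at h1
    rw [← h1, dotProduct]
    exact Finset.sum_congr rfl fun i _ => by rw [hDy i, sq]
  rw [hBinv, hdot]
  have hexpand : (D.mulVec y) ⬝ᵥ (Matrix.diagonal (fun i => (e i)⁻¹)).mulVec (D.mulVec y)
      = ∑ i, (e i)⁻¹ * (D i i * y i) ^ 2 := by
    rw [dotProduct]
    apply Finset.sum_congr rfl
    intro i _
    rw [Matrix.mulVec_diagonal, hDy i]
    ring
  rw [hexpand]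
  calc ∑ i, (e i)⁻¹ * (D i i * y i) ^ 2
      ≤ ∑ i, (2 / (σ * k)) * (D i i * y i) ^ 2 := by
        apply Finset.sum_le_sum
        intro i _
        by_cases hi : D i i = 0
        · simp [hi]
        · have hl := helb i hi
          have : (e i)⁻¹ ≤ 2 / (σ * k) := by
            rw [show (2 : ℝ) / (σ * k) = (σ * k / 2)⁻¹ by field_simp]
            exact inv_anti₀ hpos hl
          exact mul_le_mul_of_nonneg_right this (sq_nonneg _)
    _ = 2 / (σ * k) := by rw [← Finset.mul_sum, hsum, mul_one]
end
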